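/- Let n_1, n_2 ∈ ℕ, N = min(n_1,n_2), and λ_1, λ_2, λ_3 ∈ ℂ. Consider the linear recurrence (λ_1 − λ_3 + n_1 + n_2 − j)(j+1) c_{j+1} = −(λ_2 − λ_3 + n_2 − j)(n_1 − j)(n_2 − j) c_j for 0 ≤ j ≤ N−1 on sequences (c_0,…,c_N) ∈ ℂ^{N+1}. If there exist integers 0 ≤ k_0 ≤ ℓ_0 ≤ N−1 with λ_1 − λ_3 + n_1 + n_2 − ℓ_0 = 0 and λ_2 − λ_3 + n_2 − k_0 = 0, then the space of solutions is exactly 2-dimensional; otherwise, the solution space is exactly 1-dimensional. -/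
import Mathlib


/-- The space of solutions `(c_0,…,c_N)` of the linear recurrence
`A j · c_{j+1} = B j · c_j` for `0 ≤ j ≤ N−1`, as a subspace of `ℂ^{N+1}`. -/
noncomputable def solSpace (N : ℕ) (A B : ℕ → ℂ) : Submodule ℂ (Fin (N+1) → ℂ) where
  carrier := {c | ∀ j : Fin N, A j * c j.succ = B j * c j.castSucc}
  add_mem' := by
    intro a b ha hb j
    simp only [Pi.add_apply, mul_add, ha j, hb j]
  zero_mem' := by
    intro j
    simp
  smul_mem' := by
    intro r x hx j
    simp only [Pi.smul_apply, smul_eq_mul]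
    rw [mul_left_comm, hx j, mul_left_comm]

noncomputable def solSeq (A B : ℕ → ℂ) (i0 : ℕ) : ℕ → ℂ
  | 0 => if i0 = 0 then 1 else 0
  | (j+1) => if j + 1 < i0 then 0 else if j + 1 = i0 then 1 else B j / A j * solSeq A B i0 j

lemma solSeq_self (A B : ℕ → ℂ) (i0 : ℕ) : solSeq A B i0 i0 = 1 := by
  cases i0 with
  | zero => rfl
  | succ j => rw [solSeq, if_neg (by omega), if_pos rfl]

lemma solSeq_lt (A B : ℕ → ℂ) {i0 j : ℕ} (h : j < i0) : solSeq A B i0 j = 0 := by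
  cases j with
  | zero => rw [solSeq, if_neg (by omega)]
  | succ m => rw [solSeq, if_pos h]

lemma solSeq_succ (A B : ℕ → ℂ) {i0 j : ℕ} (h : i0 ≤ j) :
    solSeq A B i0 (j+1) = B j / A j * solSeq A B i0 j := by
  rw [solSeq, if_neg (by omega), if_neg (by omega)]

lemma solSeq_zero_prop (A B : ℕ → ℂ) {i0 j : ℕ} (h : i0 ≤ j) (h0 : solSeq A B i0 j = 0)
    {k : ℕ} (hk : j ≤ k) : solSeq A B i0 k = 0 := by
  induction k, hk using Nat.le_induction with
  | base => exact h0
  | succ m hm ih => rw [solSeq_succ A B (le_trans h hm), ih, mul_zero]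

lemma solSeq_mem (N : ℕ) (A B : ℕ → ℂ) (i0 : ℕ)
    (h1 : ∀ j, j + 1 = i0 → A j = 0)
    (h2 : ∀ j, i0 ≤ j → j < N → A j ≠ 0 ∨ B j * solSeq A B i0 j = 0) :
    (fun i : Fin (N+1) => solSeq A B i0 (i : ℕ)) ∈ solSpace N A B := by
  intro j
  show A (j : ℕ) * solSeq A B i0 ((j : ℕ) + 1) = B (j : ℕ) * solSeq A B i0 (j : ℕ)
  have hjv : (j : ℕ) < N := j.isLt
  rcases lt_trichotomy ((j : ℕ) + 1) i0 with h | h | h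
  · rw [solSeq_lt A B h, solSeq_lt A B (show (j:ℕ) < i0 by omega), mul_zero, mul_zero]
  · rw [h1 _ h, zero_mul, solSeq_lt A B (show (j:ℕ) < i0 by omega), mul_zero]
  · have hij : i0 ≤ (j : ℕ) := by omega
    rw [solSeq_succ A B hij]
    rcases h2 _ hij hjv with hA | hB
    · field_simp
    · rw [div_mul_eq_mul_div, hB]
      simp

lemma sol_unique (N : ℕ) (A B : ℕ → ℂ) (i0 : ℕ) (hi0 : i0 ≤ N)
    (hAfwd : ∀ j, i0 ≤ j → j < N → A j ≠ 0)
    (hBbwd : ∀ j, j < i0 → B j ≠ 0)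
    (c : Fin (N+1) → ℂ) (hc : c ∈ solSpace N A B)
    (h0 : c ⟨i0, by omega⟩ = 0) : c = 0 := by
  have hc' : ∀ m (hm : m < N), A m * c ⟨m+1, by omega⟩ = B m * c ⟨m, by omega⟩ :=
    fun m hm => hc ⟨m, hm⟩
  have cast_eq : ∀ (a b : ℕ) (ha : a < N+1) (hb : b < N+1), a = b → c ⟨a, ha⟩ = c ⟨b, hb⟩ := by
    intro a b ha hb h; subst h; rfl
  have up : ∀ d (hd : i0 + d ≤ N), c ⟨i0 + d, by omega⟩ = 0 := by
    intro d
    induction d with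
    | zero => intro _; exact h0
    | succ e ih =>
      intro hd
      have h := hc' (i0 + e) (by omega)
      rw [ih (by omega), mul_zero] at h
      rcases mul_eq_zero.mp h with h' | h'
      · exact absurd h' (hAfwd (i0 + e) (by omega) (by omega))
      · exact (cast_eq _ _ (by omega) (by omega) (by omega)).trans h'
  have down : ∀ d (hd : d ≤ i0), c ⟨i0 - d, by omega⟩ = 0 := by
    intro d
    induction d with
    | zero => intro _; exact h0
    | succ e ih =>
      intro hd
      have h := hc' (i0 - (e+1)) (by omega)
      rw [cast_eq (i0 - (e+1) + 1) (i0 - e) (by omega) (by omega) (by omega),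
        ih (by omega), mul_zero] at h
      rcases mul_eq_zero.mp h.symm with h' | h'
      · exact absurd h' (hBbwd _ (by omega))
      · exact h'
  funext i
  show c i = 0
  rcases le_or_gt (i : ℕ) i0 with h | h
  · exact (cast_eq (i : ℕ) (i0 - (i0 - (i : ℕ))) i.isLt (by omega) (by omega)).trans
      (down (i0 - (i : ℕ)) (by omega))
  · have hi := i.isLt
    exact (cast_eq (i : ℕ) (i0 + ((i : ℕ) - i0)) i.isLt (by omega) (by omega)).trans
      (up ((i : ℕ) - i0) (by omega))

lemma finrank_aux_one (N : ℕ) (A B : ℕ → ℂ) (i0 : ℕ) (hi0 : i0 ≤ N)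
    (hAfwd : ∀ j, i0 ≤ j → j < N → A j ≠ 0)
    (hAi0 : ∀ j, j + 1 = i0 → A j = 0)
    (hBbwd : ∀ j, j < i0 → B j ≠ 0) :
    Module.finrank ℂ (solSpace N A B) = 1 := by
  have hmem : (fun i : Fin (N+1) => solSeq A B i0 (i : ℕ)) ∈ solSpace N A B :=
    solSeq_mem N A B i0 hAi0 (fun j hj hjN => Or.inl (hAfwd j hj hjN))
  set v : solSpace N A B := ⟨_, hmem⟩ with hv
  have hval : ∀ x : ℂ, ((x • v : solSpace N A B) : Fin (N+1) → ℂ) ⟨i0, by omega⟩ = x := by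
    intro x
    show x * solSeq A B i0 ((⟨i0, by omega⟩ : Fin (N+1)) : ℕ) = x
    rw [show ((⟨i0, by omega⟩ : Fin (N+1)) : ℕ) = i0 from rfl, solSeq_self, mul_one]
  have e : ℂ ≃ₗ[ℂ] solSpace N A B := by
    refine
      { toFun := fun x => x • v
        map_add' := fun x y => add_smul x y v
        map_smul' := fun r x => (mul_smul r x v)
        invFun := fun c => (c : Fin (N+1) → ℂ) ⟨i0, by omega⟩
        left_inv := fun x => hval x
        right_inv := ?_ }
    intro c
    have hz : ((c : Fin (N+1) → ℂ) - (((c : Fin (N+1) → ℂ) ⟨i0, by omega⟩) • v : solSpace N A B))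
        = 0 := by
      apply sol_unique N A B i0 hi0 hAfwd hBbwd
      · exact sub_mem c.2 ((((c : Fin (N+1) → ℂ) ⟨i0, by omega⟩) • v).2)
      · show (c : Fin (N+1) → ℂ) ⟨i0, by omega⟩
          - ((((c : Fin (N+1) → ℂ) ⟨i0, by omega⟩) • v : solSpace N A B) : Fin (N+1) → ℂ)
              ⟨i0, by omega⟩ = 0
        rw [hval]
        ring
    apply Subtype.ext
    have := sub_eq_zero.mp hz
    exact this.symm
  rw [← e.finrank_eq, Module.finrank_self]

lemma finrank_aux_two (N : ℕ) (A B : ℕ → ℂ) (k0 l0 : ℕ) (hk : k0 ≤ l0) (hl : l0 < N)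
    (hA : ∀ j, j < N → j ≠ l0 → A j ≠ 0) (hAl0 : A l0 = 0) (hBk0 : B k0 = 0) :
    Module.finrank ℂ (solSpace N A B) = 2 := by
  -- the two basic solutions
  have hEl0 : B l0 * solSeq A B 0 l0 = 0 := by
    rcases eq_or_lt_of_le hk with h | h
    · rw [← h, hBk0, zero_mul]
    · have h1 : solSeq A B 0 (k0 + 1) = 0 := by
        rw [solSeq_succ A B (Nat.zero_le _), hBk0, zero_div, zero_mul]
      rw [solSeq_zero_prop A B (Nat.zero_le _) h1 h, mul_zero]
  have hmemE : (fun i : Fin (N+1) => solSeq A B 0 (i : ℕ)) ∈ solSpace N A B := by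
    apply solSeq_mem N A B 0 (fun j hj => by omega)
    intro j _ hjN
    by_cases hjl : j = l0
    · exact Or.inr (hjl ▸ hEl0)
    · exact Or.inl (hA j hjN hjl)
  have hmemF : (fun i : Fin (N+1) => solSeq A B (l0+1) (i : ℕ)) ∈ solSpace N A B := by
    apply solSeq_mem N A B (l0+1) (fun j hj => by rw [show j = l0 by omega]; exact hAl0)
    intro j hj hjN
    exact Or.inl (hA j hjN (by omega))
  set vE : solSpace N A B := ⟨_, hmemE⟩ with hvE
  set vF : solSpace N A B := ⟨_, hmemF⟩ with hvF
  -- key values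
  have hE0 : solSeq A B 0 0 = 1 := solSeq_self A B 0
  have hEl1 : solSeq A B 0 (l0 + 1) = 0 := by
    rw [solSeq_succ A B (Nat.zero_le _), hAl0, div_zero, zero_mul]
  have hF0 : solSeq A B (l0+1) 0 = 0 := solSeq_lt A B (by omega)
  have hFl1 : solSeq A B (l0+1) (l0+1) = 1 := solSeq_self A B (l0+1)
  -- uniqueness given both seeds vanish
  have uniq : ∀ c : Fin (N+1) → ℂ, c ∈ solSpace N A B → c ⟨0, by omega⟩ = 0 →
      c ⟨l0 + 1, by omega⟩ = 0 → c = 0 := by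
    intro c hc h0 h1
    have hc' : ∀ m (hm : m < N), A m * c ⟨m+1, by omega⟩ = B m * c ⟨m, by omega⟩ :=
      fun m hm => hc ⟨m, hm⟩
    have key : ∀ m, ∀ hm : m ≤ N, c ⟨m, by omega⟩ = 0 := by
      intro m
      induction m using Nat.strong_induction_on with
      | _ m ih =>
        intro hm
        match m, hm with
        | 0, _ => exact h0
        | (e+1), hm =>
          by_cases he : e = l0
          · subst he; exact h1
          · have h := hc' e (by omega)
            rw [ih e (by omega) (by omega), mul_zero] at h
            rcases mul_eq_zero.mp h with h' | h'
            · exact absurd h' (hA e (by omega) he)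
            · exact h'
    funext i
    show c i = 0
    have := key (i : ℕ) (by omega)
    exact this
  have e : (ℂ × ℂ) ≃ₗ[ℂ] solSpace N A B := by
    refine
      { toFun := fun p => p.1 • vE + p.2 • vF
        map_add' := ?_
        map_smul' := ?_
        invFun := fun c => ((c : Fin (N+1) → ℂ) ⟨0, by omega⟩,
          (c : Fin (N+1) → ℂ) ⟨l0 + 1, by omega⟩)
        left_inv := ?_
        right_inv := ?_ }
    · intro p q
      simp only [Prod.fst_add, Prod.snd_add, add_smul]
      abel
    · intro r p
      simp only [Prod.smul_fst, Prod.smul_snd, smul_eq_mul, mul_smul, RingHom.id_apply, smul_add]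
    · intro p
      have h1 : ((p.1 • vE + p.2 • vF : solSpace N A B) : Fin (N+1) → ℂ) ⟨0, by omega⟩ = p.1 := by
        show p.1 * solSeq A B 0 0 + p.2 * solSeq A B (l0+1) 0 = p.1
        rw [hE0, hF0, mul_one, mul_zero, add_zero]
      have h2 : ((p.1 • vE + p.2 • vF : solSpace N A B) : Fin (N+1) → ℂ) ⟨l0+1, by omega⟩
          = p.2 := by
        show p.1 * solSeq A B 0 (l0+1) + p.2 * solSeq A B (l0+1) (l0+1) = p.2
        rw [hEl1, hFl1, mul_one, mul_zero, zero_add]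
      exact Prod.ext h1 h2
    · intro c
      set x := (c : Fin (N+1) → ℂ) ⟨0, by omega⟩
      set y := (c : Fin (N+1) → ℂ) ⟨l0 + 1, by omega⟩
      have hz : ((c : Fin (N+1) → ℂ) - ((x • vE + y • vF : solSpace N A B) : Fin (N+1) → ℂ))
          = 0 := by
        apply uniq
        · exact sub_mem c.2 (x • vE + y • vF).2
        · show x - ((x • vE + y • vF : solSpace N A B) : Fin (N+1) → ℂ) ⟨0, by omega⟩ = 0
          show x - (x * solSeq A B 0 0 + y * solSeq A B (l0+1) 0) = 0
          rw [hE0, hF0]; ring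
        · show y - ((x • vE + y • vF : solSpace N A B) : Fin (N+1) → ℂ) ⟨l0+1, by omega⟩ = 0
          show y - (x * solSeq A B 0 (l0+1) + y * solSeq A B (l0+1) (l0+1)) = 0
          rw [hEl1, hFl1]; ring
      apply Subtype.ext
      exact (sub_eq_zero.mp hz).symm
  rw [← e.finrank_eq]
  rw [Module.finrank_prod, Module.finrank_self]

/-- Dimension of the solution space of the recurrence
`(λ₁−λ₃+n₁+n₂−j)(j+1)c_{j+1} = −(λ₂−λ₃+n₂−j)(n₁−j)(n₂−j)c_j`, `0 ≤ j ≤ N−1`, `N = min(n₁,n₂)`: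
it is 2 exactly in the degenerate case `∃ k₀ ≤ ℓ₀ ≤ N−1` with both coefficient vanishings,
and 1 otherwise. -/
theorem stmt8 (n1 n2 : ℕ) (l1 l2 l3 : ℂ) :
    ((∃ k0 l0 : ℕ, k0 ≤ l0 ∧ l0 < min n1 n2
        ∧ l1 - l3 + (n1 : ℂ) + (n2 : ℂ) - (l0 : ℂ) = 0
        ∧ l2 - l3 + (n2 : ℂ) - (k0 : ℂ) = 0) →
      Module.finrank ℂ (solSpace (min n1 n2)
        (fun j => (l1 - l3 + (n1 : ℂ) + (n2 : ℂ) - (j : ℂ)) * ((j : ℂ) + 1))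
        (fun j => -((l2 - l3 + (n2 : ℂ) - (j : ℂ)) * ((n1 : ℂ) - (j : ℂ)) * ((n2 : ℂ) - (j : ℂ))))) = 2)
    ∧ ((¬ ∃ k0 l0 : ℕ, k0 ≤ l0 ∧ l0 < min n1 n2
        ∧ l1 - l3 + (n1 : ℂ) + (n2 : ℂ) - (l0 : ℂ) = 0
        ∧ l2 - l3 + (n2 : ℂ) - (k0 : ℂ) = 0) →
      Module.finrank ℂ (solSpace (min n1 n2)
        (fun j => (l1 - l3 + (n1 : ℂ) + (n2 : ℂ) - (j : ℂ)) * ((j : ℂ) + 1))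
        (fun j => -((l2 - l3 + (n2 : ℂ) - (j : ℂ)) * ((n1 : ℂ) - (j : ℂ)) * ((n2 : ℂ) - (j : ℂ))))) = 1) := by
  set N := min n1 n2 with hN
  set A : ℕ → ℂ := fun j => (l1 - l3 + (n1 : ℂ) + (n2 : ℂ) - (j : ℂ)) * ((j : ℂ) + 1) with hA
  set B : ℕ → ℂ :=
    fun j => -((l2 - l3 + (n2 : ℂ) - (j : ℂ)) * ((n1 : ℂ) - (j : ℂ)) * ((n2 : ℂ) - (j : ℂ)))
    with hB
  have hcne : ∀ a b : ℕ, a ≠ b → (a : ℂ) ≠ (b : ℂ) := fun a b h => by exact_mod_cast h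
  have hj1 : ∀ j : ℕ, ((j : ℂ) + 1) ≠ 0 := fun j => by
    have : ((j + 1 : ℕ) : ℂ) ≠ 0 := Nat.cast_ne_zero.mpr (Nat.succ_ne_zero j)
    push_cast at this; exact this
  -- A j = 0 iff the linear factor vanishes
  have hAzero : ∀ j : ℕ, A j = 0 → l1 - l3 + (n1 : ℂ) + (n2 : ℂ) - (j : ℂ) = 0 := by
    intro j h
    rcases mul_eq_zero.mp h with h' | h'
    · exact h'
    · exact absurd h' (hj1 j)
  have hBzero : ∀ j : ℕ, j < N → B j = 0 → l2 - l3 + (n2 : ℂ) - (j : ℂ) = 0 := by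
    intro j hjN h
    have h2 : (l2 - l3 + (n2 : ℂ) - (j : ℂ)) * ((n1 : ℂ) - (j : ℂ)) * ((n2 : ℂ) - (j : ℂ)) = 0 :=
      neg_eq_zero.mp h
    have hn1 : (n1 : ℂ) - (j : ℂ) ≠ 0 := sub_ne_zero.mpr (hcne n1 j (by omega))
    have hn2 : (n2 : ℂ) - (j : ℂ) ≠ 0 := sub_ne_zero.mpr (hcne n2 j (by omega))
    rcases mul_eq_zero.mp h2 with h' | h'
    · rcases mul_eq_zero.mp h' with h'' | h''
      · exact h''
      · exact absurd h'' hn1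
    · exact absurd h' hn2
  constructor
  · rintro ⟨k0, l0, hkl, hl0N, hzA, hzB⟩
    apply finrank_aux_two N A B k0 l0 hkl hl0N
    · intro j hjN hjl hj0
      have h1 := hAzero j hj0
      have : (j : ℂ) = (l0 : ℂ) := by linear_combination hzA - h1
      exact hjl (Nat.cast_inj.mp this)
    · show (l1 - l3 + (n1 : ℂ) + (n2 : ℂ) - (l0 : ℂ)) * ((l0 : ℂ) + 1) = 0
      rw [hzA, zero_mul]
    · show -((l2 - l3 + (n2 : ℂ) - (k0 : ℂ)) * ((n1 : ℂ) - (k0 : ℂ)) * ((n2 : ℂ) - (k0 : ℂ))) = 0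
      rw [hzB, zero_mul, zero_mul, neg_zero]
  · intro hne
    by_cases hl : ∃ l0 : ℕ, l0 < N ∧ l1 - l3 + (n1 : ℂ) + (n2 : ℂ) - (l0 : ℂ) = 0
    · obtain ⟨l0, hl0N, hzA⟩ := hl
      apply finrank_aux_one N A B (l0 + 1) (by omega)
      · intro j hj hjN hj0
        have h1 := hAzero j hj0
        have : (j : ℂ) = (l0 : ℂ) := by linear_combination hzA - h1
        have hj' : j = l0 := Nat.cast_inj.mp this
        omega
      · intro j hj
        have hjl : j = l0 := by omega
        subst hjl
        show (l1 - l3 + (n1 : ℂ) + (n2 : ℂ) - (j : ℂ)) * ((j : ℂ) + 1) = 0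
        rw [hzA, zero_mul]
      · intro j hj hj0
        have hz := hBzero j (by omega) hj0
        exact hne ⟨j, l0, by omega, hl0N, hzA, hz⟩
    · apply finrank_aux_one N A B 0 (Nat.zero_le _)
      · intro j _ hjN hj0
        exact hl ⟨j, hjN, hAzero j hj0⟩
      · intro j hj; omega
      · intro j hj; omega
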